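/- Existence and uniqueness of the marginal vector for loop-free strategies: In the service-chain model, call a forwarding strategy φ loop-free if for every stage (a,k) there is no cycle of nodes i₁, i₂, …, i_L, i₁ in V with φ_{i_l i_{l+1}}(a,k) > 0 for every consecutive pair (indices cyclic). If (φ,t) is feasible for r and φ is loop-free, then there exists exactly one marginal vector λ for (φ,t), i.e. exactly one solution of the recursion λ_i(a,k) = Σ_{j∈V} φ_{ij}(a,k)(L(a,k) D'_{ij}(F_{ij}) + λ_j(a,k)) + φ_{i0}(a,k)(w_i(a,k) C'_i(G_i) + λ_i(a,k+1)) for k < K_a, together with λ_i(a,K_a) = Σ_{j∈V} φ_{ij}(a,K_a)(L(a,K_a) D'_{ij}(F_{ij}) + λ_j(a,K_a)). -/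

import Mathlib

open scoped BigOperators
open Classical

/-- The service-chain network model: a finite directed graph, a finite set of
applications, each with a chain length, a destination, packet sizes and computation
weights, together with nondecreasing convex continuously differentiable link and
computation cost functions (with their derivatives). -/
structure SCNet (V A : Type) [Fintype V] [DecidableEq V] [Fintype A] where
  /-- the edge relation -/
  E : V → V → Prop
  /-- chain length of each application -/
  K : A → ℕ
  /-- destination of each application -/
  dest : A → V
  /-- packet size of each stage -/
  L : A → ℕ → ℝ
  hL : ∀ a k, k ≤ K a → 0 < L a k
  /-- computation weights -/
  w : V → A → ℕ → ℝ
  hw : ∀ i a k, k ≤ K a → 0 < w i a k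
  /-- link cost functions -/
  D : V → V → ℝ → ℝ
  /-- derivative of the link cost functions -/
  D' : V → V → ℝ → ℝ
  /-- computation cost functions -/
  C : V → ℝ → ℝ
  /-- derivative of the computation cost functions -/
  C' : V → ℝ → ℝ
  hD_mono : ∀ i j, E i j → MonotoneOn (D i j) (Set.Ici 0)
  hD_conv : ∀ i j, E i j → ConvexOn ℝ (Set.Ici 0) (D i j)
  hD_deriv : ∀ i j, E i j → ∀ x ∈ Set.Ici (0 : ℝ),
    HasDerivWithinAt (D i j) (D' i j x) (Set.Ici 0) x
  hD'_cont : ∀ i j, E i j → ContinuousOn (D' i j) (Set.Ici 0)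
  hC_mono : ∀ i, MonotoneOn (C i) (Set.Ici 0)
  hC_conv : ∀ i, ConvexOn ℝ (Set.Ici 0) (C i)
  hC_deriv : ∀ i, ∀ x ∈ Set.Ici (0 : ℝ),
    HasDerivWithinAt (C i) (C' i x) (Set.Ici 0) x
  hC'_cont : ∀ i, ContinuousOn (C' i) (Set.Ici 0)

variable {V A : Type} [Fintype V] [DecidableEq V] [Fintype A]

/-- A forwarding strategy: `φ i (some j) a k` is the fraction of stage-(a,k) traffic
that node `i` forwards to node `j`; `φ i none a k` is the fraction forwarded to `i`'s CPU. -/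
structure IsStrategy (N : SCNet V A) (φ : V → Option V → A → ℕ → ℝ) : Prop where
  nonneg : ∀ i j a k, 0 ≤ φ i j a k
  le_one : ∀ i j a k, φ i j a k ≤ 1
  no_edge : ∀ i j a k, ¬ N.E i j → φ i (some j) a k = 0
  cpu_last : ∀ i a, φ i none a (N.K a) = 0
  sum_one : ∀ i a k, k ≤ N.K a → ¬(i = N.dest a ∧ k = N.K a) →
    φ i none a k + ∑ j, φ i (some j) a k = 1
  sum_dest : ∀ a,
    φ (N.dest a) none a (N.K a) + ∑ j, φ (N.dest a) (some j) a (N.K a) = 0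

/-- A traffic vector for input rates `r` and strategy `φ`. -/
structure IsTraffic (N : SCNet V A) (r : V → A → ℝ) (φ : V → Option V → A → ℕ → ℝ)
    (t : V → A → ℕ → ℝ) : Prop where
  nonneg : ∀ i a k, 0 ≤ t i a k
  base : ∀ i a, t i a 0 = r i a + ∑ j, t j a 0 * φ j (some i) a 0
  step : ∀ i a k, 1 ≤ k → k ≤ N.K a →
    t i a k = (∑ j, t j a k * φ j (some i) a k) + t i a (k - 1) * φ i none a (k - 1)

/-- A pair (strategy, traffic) feasible for the input rates `r`. -/
def Feasible (N : SCNet V A) (r : V → A → ℝ) (φ : V → Option V → A → ℕ → ℝ)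
    (t : V → A → ℕ → ℝ) : Prop :=
  IsStrategy N φ ∧ IsTraffic N r φ t

/-- Total flow (bit/sec) on link `(i,j)`. -/
noncomputable def linkFlow (N : SCNet V A) (φ : V → Option V → A → ℕ → ℝ)
    (t : V → A → ℕ → ℝ) (i j : V) : ℝ :=
  ∑ a, ∑ k ∈ Finset.range (N.K a + 1), N.L a k * (t i a k * φ i (some j) a k)

/-- Total computation workload at node `i`. -/
noncomputable def workload (N : SCNet V A) (φ : V → Option V → A → ℕ → ℝ)
    (t : V → A → ℕ → ℝ) (i : V) : ℝ :=
  ∑ a, ∑ k ∈ Finset.range (N.K a + 1), N.w i a k * (t i a k * φ i none a k)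

/-- The aggregated communication and computation cost `T(φ,t)`. -/
noncomputable def totalCost (N : SCNet V A) (φ : V → Option V → A → ℕ → ℝ)
    (t : V → A → ℕ → ℝ) : ℝ :=
  (∑ i, ∑ j, if N.E i j then N.D i j (linkFlow N φ t i j) else 0)
    + ∑ i, N.C i (workload N φ t i)

/-- A marginal-cost vector `λ` for the pair `(φ,t)`, i.e. a solution of the
recursion defining `∂T/∂t_i(a,k)`. -/
structure IsMarginal (N : SCNet V A) (φ : V → Option V → A → ℕ → ℝ)
    (t : V → A → ℕ → ℝ) (lam : V → A → ℕ → ℝ) : Prop where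
  last : ∀ i a, lam i a (N.K a) =
    ∑ j, φ i (some j) a (N.K a) *
      (N.L a (N.K a) * N.D' i j (linkFlow N φ t i j) + lam j a (N.K a))
  step : ∀ i a k, k < N.K a →
    lam i a k =
      (∑ j, φ i (some j) a k * (N.L a k * N.D' i j (linkFlow N φ t i j) + lam j a k))
        + φ i none a k * (N.w i a k * N.C' i (workload N φ t i) + lam i a (k + 1))

/-- `j` is an admissible forwarding direction at node `i` and stage `(a,k)`:
either a physical out-neighbor, or the CPU provided `k < K a`. -/
def Admissible (N : SCNet V A) (i : V) (a : A) (k : ℕ) : Option V → Prop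
  | some j => N.E i j
  | none => k < N.K a

/-- The modified marginals `δ_{ij}(a,k)`. -/
noncomputable def mdelta (N : SCNet V A) (φ : V → Option V → A → ℕ → ℝ)
    (t : V → A → ℕ → ℝ) (lam : V → A → ℕ → ℝ) (i : V) (a : A) (k : ℕ) :
    Option V → ℝ
  | some j => N.L a k * N.D' i j (linkFlow N φ t i j) + lam j a k
  | none => N.w i a k * N.C' i (workload N φ t i) + lam i a (k + 1)

/-- The sufficient-optimality condition: every direction used at node `i` for stage
`(a,k)` achieves the minimum modified marginal over all admissible directions. -/
def SuffCond (N : SCNet V A) (φ : V → Option V → A → ℕ → ℝ)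
    (t : V → A → ℕ → ℝ) (lam : V → A → ℕ → ℝ) : Prop :=
  ∀ i a k, k ≤ N.K a → ∀ j, Admissible N i a k j → 0 < φ i j a k →
    ∀ j', Admissible N i a k j' →
      mdelta N φ t lam i a k j ≤ mdelta N φ t lam i a k j'

/-- A strategy is loop-free if for every stage `(a,k)` there is no cycle of nodes
along which the forwarding fractions of that stage are all strictly positive. -/
def LoopFree (N : SCNet V A) (φ : V → Option V → A → ℕ → ℝ) : Prop :=
  ∀ a k, k ≤ N.K a → ∀ (len : ℕ), 1 ≤ len → ∀ c : ℕ → V, c len = c 0 →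
    ¬ (∀ l < len, 0 < φ (c l) (some (c (l + 1))) a k)


lemma aux_fix_existsUnique {V : Type} [Fintype V] [DecidableEq V]
    (M : Matrix V V ℝ) (hM : IsUnit (1 - M)) (c : V → ℝ) :
    ∃! x : V → ℝ, ∀ i, x i = (∑ j, M i j * x j) + c i := by
  obtain ⟨u, hu⟩ := hM
  have h1 : (↑u⁻¹ : Matrix V V ℝ) * (1 - M) = 1 := by rw [← hu]; exact u.inv_mul
  have h2 : (1 - M) * (↑u⁻¹ : Matrix V V ℝ) = 1 := by rw [← hu]; exact u.mul_inv
  set B : Matrix V V ℝ := ↑u⁻¹ with hB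
  have hsub : ∀ (x : V → ℝ) (i : V), (1 - M).mulVec x i = x i - ∑ j, M i j * x j := by
    intro x i
    simp [Matrix.mulVec, dotProduct, Matrix.sub_apply, Matrix.one_apply,
      sub_mul, Finset.sum_sub_distrib, ite_mul, one_mul, zero_mul]
  have hiff : ∀ x : V → ℝ, (∀ i, x i = (∑ j, M i j * x j) + c i) ↔ (1 - M).mulVec x = c := by
    intro x
    constructor
    · intro h; funext i; rw [hsub]; have := h i; linarith
    · intro h i
      have := congrFun h i
      rw [hsub] at this
      linarith
  refine ⟨B.mulVec c, (hiff _).mpr (by rw [Matrix.mulVec_mulVec, h2, Matrix.one_mulVec]), ?_⟩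
  · intro y hy
    have hy := (hiff y).mp hy
    calc y = (1 : Matrix V V ℝ).mulVec y := by rw [Matrix.one_mulVec]
    _ = (B * (1 - M)).mulVec y := by rw [h1]
    _ = B.mulVec ((1 - M).mulVec y) := by rw [Matrix.mulVec_mulVec]
    _ = B.mulVec c := by rw [hy]

lemma aux_nilpotent {V : Type} [Fintype V] [DecidableEq V]
    (M : Matrix V V ℝ) (hnn : ∀ i j, 0 ≤ M i j)
    (hnc : ∀ (len : ℕ), 1 ≤ len → ∀ c : ℕ → V, c len = c 0 →
      ¬ (∀ l < len, 0 < M (c l) (c (l + 1)))) :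
    IsNilpotent M := by
  refine ⟨Fintype.card V + 1, ?_⟩
  have hpath : ∀ m (i j : V), 0 ≤ (M ^ m) i j ∧
      (0 < (M ^ m) i j → ∃ c : ℕ → V, c 0 = i ∧ c m = j ∧
        ∀ l < m, 0 < M (c l) (c (l + 1))) := by
    intro m
    induction m with
    | zero =>
      intro i j
      constructor
      · by_cases h : i = j <;> simp [Matrix.one_apply, h]
      · intro hpos
        by_cases h : i = j
        · exact ⟨fun _ => i, rfl, by simp [h], fun l hl => absurd hl (Nat.not_lt_zero l)⟩
        · simp [Matrix.one_apply, h] at hpos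
    | succ m ih =>
      intro i j
      have hexp : (M ^ (m + 1)) i j = ∑ x, (M ^ m) i x * M x j := by
        rw [pow_succ, Matrix.mul_apply]
      constructor
      · rw [hexp]; exact Finset.sum_nonneg fun x _ => mul_nonneg (ih i x).1 (hnn x j)
      · intro hpos
        rw [hexp] at hpos
        obtain ⟨x, -, hx⟩ : ∃ x ∈ Finset.univ, 0 < (M ^ m) i x * M x j := by
          by_contra hcon
          push_neg at hcon
          have : ∑ x, (M ^ m) i x * M x j ≤ 0 := Finset.sum_nonpos fun x hxx => hcon x hxx
          linarith
        have h1 : 0 < (M ^ m) i x := by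
          rcases lt_or_eq_of_le (ih i x).1 with h | h
          · exact h
          · rw [← h] at hx; simp at hx
        have h2 : 0 < M x j := by
          rcases lt_or_eq_of_le (hnn x j) with h | h
          · exact h
          · rw [← h] at hx; simp at hx
        obtain ⟨c, hc0, hcm, hce⟩ := (ih i x).2 h1
        refine ⟨fun l => if l = m + 1 then j else c l, by simp [hc0], by simp, ?_⟩
        intro l hl
        rcases Nat.lt_succ_iff_lt_or_eq.mp hl with h | h
        · have e1 : l ≠ m + 1 := by omega
          have e2 : l + 1 ≠ m + 1 := by omega
          simpa [e1, e2, show l ≠ m by omega] using hce l h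
        · subst h
          simp only [if_neg (by omega : l ≠ l + 1), if_pos rfl, hcm]
          exact h2
  ext i j
  show (M ^ (Fintype.card V + 1)) i j = 0
  rcases lt_or_eq_of_le (hpath (Fintype.card V + 1) i j).1 with h | h
  · exfalso
    obtain ⟨c, hc0, hcend, hce⟩ := (hpath (Fintype.card V + 1) i j).2 h
    obtain ⟨x, y, hxy, hcxy⟩ := Fintype.exists_ne_map_eq_of_card_lt
      (fun l : Fin (Fintype.card V + 2) => c l) (by simp)
    have hgen : ∀ p q : ℕ, p < q → q ≤ Fintype.card V + 1 → c p = c q → False := by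
      intro p q hpq hqle hceq
      refine hnc (q - p) (by omega) (fun l => c (p + l)) ?_ ?_
      · show c (p + (q - p)) = c (p + 0)
        have e : p + (q - p) = q := by omega
        rw [e, add_zero, hceq]
      · intro l hl
        have h1 : p + l + 1 = p + (l + 1) := by omega
        have := hce (p + l) (by omega)
        rwa [h1] at this
    rcases hxy.lt_or_gt with hlt | hlt
    · exact hgen x y (by exact_mod_cast hlt) (Nat.lt_succ_iff.mp y.isLt) hcxy
    · exact hgen y x (by exact_mod_cast hlt) (Nat.lt_succ_iff.mp x.isLt) hcxy.symm
  · exact h.symm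

/-- **Existence and uniqueness of the marginal vector for loop-free strategies.**
If `(φ,t)` is feasible for `r` and `φ` is loop-free, then there is exactly one
solution `λ` (on the stage coordinates) of the marginal-cost recursion. -/
theorem marginal_exists_unique_of_loopFree
    (N : SCNet V A) (r : V → A → ℝ) (hr : ∀ i a, 0 ≤ r i a)
    (φ : V → Option V → A → ℕ → ℝ) (t : V → A → ℕ → ℝ)
    (hfeas : Feasible N r φ t) (hlf : LoopFree N φ) :
    ∃ lam : V → A → ℕ → ℝ, IsMarginal N φ t lam ∧
      ∀ lam' : V → A → ℕ → ℝ, IsMarginal N φ t lam' →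
        ∀ i a k, k ≤ N.K a → lam' i a k = lam i a k := by
  obtain ⟨hST, hTT⟩ := hfeas
  have key : ∀ a (k : ℕ), k ≤ N.K a → ∀ next : V → ℝ,
      ∃! x : V → ℝ, ∀ i, x i =
        (∑ j, φ i (some j) a k * (N.L a k * N.D' i j (linkFlow N φ t i j) + x j))
          + φ i none a k * (N.w i a k * N.C' i (workload N φ t i) + next i) := by
    intro a k hk next
    set M : Matrix V V ℝ := Matrix.of (fun i j => φ i (some j) a k) with hMdef
    have hnn : ∀ i j, 0 ≤ M i j := fun i j => hST.nonneg i (some j) a k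
    have hnil : IsNilpotent M :=
      aux_nilpotent M hnn (fun len hlen c hc => hlf a k hk len hlen c hc)
    have hunit : IsUnit (1 - M) := hnil.isUnit_one_sub
    set cv : V → ℝ := fun i =>
      (∑ j, φ i (some j) a k * (N.L a k * N.D' i j (linkFlow N φ t i j)))
        + φ i none a k * (N.w i a k * N.C' i (workload N φ t i) + next i) with hcdef
    have heq : ∀ (x : V → ℝ) (i : V),
        ((∑ j, φ i (some j) a k * (N.L a k * N.D' i j (linkFlow N φ t i j) + x j))
          + φ i none a k * (N.w i a k * N.C' i (workload N φ t i) + next i))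
        = (∑ j, M i j * x j) + cv i := by
      intro x i
      simp only [hcdef, hMdef, Matrix.of_apply, mul_add, Finset.sum_add_distrib]
      ring
    obtain ⟨x, hx, hxu⟩ := aux_fix_existsUnique M hunit cv
    exact ⟨x, fun i => by rw [heq x i]; exact hx i,
      fun y hy => hxu y (fun i => by rw [← heq y i]; exact hy i)⟩
  choose! f hf using key
  have hf1 := fun a k hk next => (hf a k hk next).1
  have hf2 := fun a k hk next => (hf a k hk next).2

  set lamA : A → ℕ → V → ℝ := fun a =>
    Nat.rec (f a (N.K a) (fun _ => 0)) (fun m prev => f a (N.K a - (m + 1)) prev) with hlamA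
  have hA0 : ∀ a, lamA a 0 = f a (N.K a) (fun _ => 0) := fun a => rfl
  have hAs : ∀ a m, lamA a (m + 1) = f a (N.K a - (m + 1)) (lamA a m) := fun a m => rfl
  refine ⟨fun i a k => lamA a (N.K a - k) i, ⟨?_, ?_⟩, ?_⟩
  · intro i a
    simp only [Nat.sub_self]
    have h := hf1 a (N.K a) le_rfl (fun _ => 0) i
    rw [hA0]
    rw [hST.cpu_last i a] at h
    simpa using h
  · intro i a k hk
    have hm1 : N.K a - k = (N.K a - (k + 1)) + 1 := by omega
    have hm2 : N.K a - ((N.K a - (k + 1)) + 1) = k := by omega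
    simp only [hm1, hAs, hm2]
    exact hf1 a k (le_of_lt hk) (lamA a (N.K a - (k + 1))) i
  · intro lam' hlam' i a k hk
    show lam' i a k = lamA a (N.K a - k) i
    have main : ∀ m (k : ℕ), k ≤ N.K a → N.K a - k = m → ∀ i, lam' i a k = lamA a m i := by
      intro m
      induction m with
      | zero =>
        intro k hk hmk i
        have hkK : k = N.K a := by omega
        subst hkK
        have hP : ∀ i, lam' i a (N.K a) =
            (∑ j, φ i (some j) a (N.K a) *
              (N.L a (N.K a) * N.D' i j (linkFlow N φ t i j) + lam' j a (N.K a)))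
              + φ i none a (N.K a) *
                (N.w i a (N.K a) * N.C' i (workload N φ t i) + (fun _ : V => (0:ℝ)) i) := by
          intro i
          rw [hlam'.last i a, hST.cpu_last i a]
          ring
        have hu := hf2 a (N.K a) le_rfl (fun _ => 0) (fun i => lam' i a (N.K a)) hP
        rw [hA0]
        exact congrFun hu i
      | succ m ih =>
        intro k hk hmk i
        have hklt : k < N.K a := by omega
        have ihs : ∀ i, lam' i a (k + 1) = lamA a m i := ih (k + 1) (by omega) (by omega)
        have hP : ∀ i, lam' i a k =
            (∑ j, φ i (some j) a k *
              (N.L a k * N.D' i j (linkFlow N φ t i j) + lam' j a k))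
              + φ i none a k * (N.w i a k * N.C' i (workload N φ t i) + lamA a m i) := by
          intro i
          have h := hlam'.step i a k hklt
          rwa [ihs i] at h
        have hu := hf2 a k (le_of_lt hklt) (lamA a m) (fun i => lam' i a k) hP
        rw [hAs, show N.K a - (m + 1) = k by omega]
        exact congrFun hu i
    exact main (N.K a - k) k hk rfl i
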